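/- arXiv:1301.1711 — 7 statements merged into one kernel-verified Lean document; each statement's English description precedes it below -/
import Mathlib

section
/- Let $\{v_k\}$ be a sequence of nonnegative random variables with $E[v_0] < \infty$, and let $\{\alpha_k\}$, $\{\mu_k\}$ be deterministic scalar sequences with $0 \le \alpha_k \le 1$, $\mu_k \ge 0$, $E[v_{k+1} \mid v_0,\ldots,v_k] \le (1-\alpha_k) v_k + \mu_k$ almost surely, $\sum_k \alpha_k = \infty$, $\sum_k \mu_k < \infty$, and $\mu_k/\alpha_k \to 0$. Then $v_k \to 0$ almost surely and $E[v_k] \to 0$. -/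
open MeasureTheory Filter

open Finset in
lemma det_lemma (e α μs : ℕ → ℝ) (he0 : ∀ k, 0 ≤ e k)
    (hα : ∀ k, 0 ≤ α k ∧ α k ≤ 1) (hμ : ∀ k, 0 ≤ μs k)
    (hrec : ∀ k, e (k+1) ≤ (1 - α k) * e k + μs k)
    (hαsum : ¬ Summable α) (hμsum : Summable μs) :
    Tendsto e atTop (nhds 0) := by
  have key : ∀ m n, m ≤ n →
      e n ≤ (∏ j ∈ Finset.Ico m n, (1 - α j)) * e m + ∑ j ∈ Finset.Ico m n, μs j := by
    intro m n hmn
    induction n, hmn using Nat.le_induction with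
    | base => simp
    | succ n hmn ih =>
      have h1 : 0 ≤ 1 - α n := by linarith [(hα n).2]
      have hP : 0 ≤ ∏ j ∈ Finset.Ico m n, (1 - α j) :=
        Finset.prod_nonneg fun j _ => by linarith [(hα j).2]
      have hSg : 0 ≤ ∑ j ∈ Finset.Ico m n, μs j := Finset.sum_nonneg fun j _ => hμ j
      calc e (n+1) ≤ (1 - α n) * e n + μs n := hrec n
        _ ≤ (1 - α n) * ((∏ j ∈ Finset.Ico m n, (1 - α j)) * e m
              + ∑ j ∈ Finset.Ico m n, μs j) + μs n := by
            nlinarith [mul_le_mul_of_nonneg_left ih h1]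
        _ ≤ (∏ j ∈ Finset.Ico m (n+1), (1 - α j)) * e m + ∑ j ∈ Finset.Ico m (n+1), μs j := by
            rw [Finset.prod_Ico_succ_top hmn, Finset.sum_Ico_succ_top hmn]
            have h2 : (1 - α n) * (∑ j ∈ Finset.Ico m n, μs j) ≤ ∑ j ∈ Finset.Ico m n, μs j := by
              nlinarith [(hα n).1]
            nlinarith
  have hdiv : Tendsto (fun n => ∑ i ∈ Finset.range n, α i) atTop atTop :=
    (not_summable_iff_tendsto_nat_atTop_of_nonneg (fun n => (hα n).1)).1 hαsum
  have htail : Tendsto (fun m => ∑' k, μs (k + m)) atTop (nhds 0) := tendsto_sum_nat_add μs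
  rw [Metric.tendsto_atTop]
  intro ε hε
  obtain ⟨m, hm⟩ := (Metric.tendsto_atTop.1 htail (ε/2) (by linarith)).imp (fun m h => h m le_rfl)
  have htnn : 0 ≤ ∑' k, μs (k + m) := tsum_nonneg fun k => hμ _
  have htm : ∑' k, μs (k + m) < ε/2 := by
    rw [Real.dist_eq, abs_of_nonneg (by simpa using htnn)] at hm
    simpa using hm
  have hsummm : Summable fun k => μs (k + m) := (summable_nat_add_iff m).2 hμsum
  have hIco : ∀ n, ∑ j ∈ Finset.Ico m n, μs j ≤ ∑' k, μs (k + m) := by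
    intro n
    rw [Finset.sum_Ico_eq_sum_range]
    calc ∑ i ∈ Finset.range (n - m), μs (m + i)
        = ∑ i ∈ Finset.range (n - m), μs (i + m) := by
          apply Finset.sum_congr rfl; intro i _; rw [add_comm]
      _ ≤ ∑' k, μs (k + m) := sum_le_hasSum _ (fun i _ => hμ _) hsummm.hasSum
  have hprodle : ∀ n, (∏ j ∈ Finset.Ico m n, (1 - α j)) ≤
      Real.exp (-(∑ j ∈ Finset.Ico m n, α j)) := by
    intro n
    calc ∏ j ∈ Finset.Ico m n, (1 - α j) ≤ ∏ j ∈ Finset.Ico m n, Real.exp (-α j) := by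
          apply Finset.prod_le_prod
          · intro j _; linarith [(hα j).2]
          · intro j _; linarith [Real.add_one_le_exp (-α j)]
      _ = Real.exp (-(∑ j ∈ Finset.Ico m n, α j)) := by
          rw [← Real.exp_sum]; congr 1; rw [← Finset.sum_neg_distrib]
  have hA : Tendsto (fun n => ∑ j ∈ Finset.Ico m n, α j) atTop atTop := by
    apply Tendsto.congr' (f₁ := fun n => (∑ j ∈ Finset.range n, α j) - ∑ j ∈ Finset.range m, α j)
    · filter_upwards [eventually_ge_atTop m] with n hn
      rw [Finset.sum_Ico_eq_sub _ hn]
    · exact tendsto_atTop_add_const_right _ _ hdiv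
  have hexp : Tendsto (fun n => Real.exp (-(∑ j ∈ Finset.Ico m n, α j)) * e m) atTop (nhds 0) := by
    have h0 : Tendsto (fun n => Real.exp (-(∑ j ∈ Finset.Ico m n, α j))) atTop (nhds 0) :=
      Real.tendsto_exp_atBot.comp (tendsto_neg_atBot_iff.2 hA)
    simpa using h0.mul_const (e m)
  obtain ⟨N, hN⟩ := Metric.tendsto_atTop.1 hexp (ε/2) (by linarith)
  refine ⟨max m N, fun n hn => ?_⟩
  have hmn : m ≤ n := le_trans (le_max_left _ _) hn
  have hNn : N ≤ n := le_trans (le_max_right _ _) hn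
  have h1 := key m n hmn
  have h2 := hN n hNn
  rw [Real.dist_eq] at h2 ⊢
  have hexpnn : 0 ≤ Real.exp (-(∑ j ∈ Finset.Ico m n, α j)) * e m :=
    mul_nonneg (Real.exp_pos _).le (he0 m)
  rw [abs_of_nonneg (by simpa using hexpnn)] at h2
  have h3 : (∏ j ∈ Finset.Ico m n, (1 - α j)) * e m ≤
      Real.exp (-(∑ j ∈ Finset.Ico m n, α j)) * e m :=
    mul_le_mul_of_nonneg_right (hprodle n) (he0 m)
  have := hIco n
  rw [abs_of_nonneg (by simpa using he0 n)]
  simp only [sub_zero]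
  linarith

theorem stmt_0 {Ω : Type*} [MeasurableSpace Ω] (μ : Measure Ω) [IsProbabilityMeasure μ]
    (v : ℕ → Ω → ℝ) (α μseq : ℕ → ℝ)
    (hmeas : ∀ k, Measurable (v k))
    (hint : ∀ k, Integrable (v k) μ)
    (hnonneg : ∀ k, ∀ᵐ ω ∂μ, 0 ≤ v k ω)
    (hα : ∀ k, 0 ≤ α k ∧ α k ≤ 1)
    (hμ : ∀ k, 0 ≤ μseq k)
    (hrec : ∀ k, ∀ᵐ ω ∂μ,
      (μ[v (k+1) | ⨆ i ∈ Finset.range (k+1), MeasurableSpace.comap (v i) (borel ℝ)]) ω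
        ≤ (1 - α k) * v k ω + μseq k)
    (hαsum : ¬ Summable α)
    (hμsum : Summable μseq)
    (hratio : Tendsto (fun k => μseq k / α k) atTop (nhds 0)) :
    (∀ᵐ ω ∂μ, Tendsto (fun k => v k ω) atTop (nhds 0)) ∧
      Tendsto (fun k => ∫ ω, v k ω ∂μ) atTop (nhds 0) := by
  have hb : (borel ℝ) = (inferInstance : MeasurableSpace ℝ) := BorelSpace.measurable_eq.symm
  have hcomap_le : ∀ i, MeasurableSpace.comap (v i) (borel ℝ) ≤ ‹MeasurableSpace Ω› := by
    intro i; rw [hb]; exact (hmeas i).comap_le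
  have hm : ∀ k, (⨆ i ∈ Finset.range (k+1), MeasurableSpace.comap (v i) (borel ℝ))
      ≤ ‹MeasurableSpace Ω› := fun k => iSup₂_le fun i _ => hcomap_le i
  -- integral recursion
  set ek : ℕ → ℝ := fun k => ∫ ω, v k ω ∂μ with hek_def
  have hek0 : ∀ k, 0 ≤ ek k := fun k => integral_nonneg_of_ae (hnonneg k)
  have hekrec : ∀ k, ek (k+1) ≤ (1 - α k) * ek k + μseq k := by
    intro k
    have h1 : ek (k+1) = ∫ ω, (μ[v (k+1) |
        ⨆ i ∈ Finset.range (k+1), MeasurableSpace.comap (v i) (borel ℝ)]) ω ∂μ :=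
      (integral_condExp (hm k)).symm
    rw [h1]
    calc ∫ ω, (μ[v (k+1) | ⨆ i ∈ Finset.range (k+1),
            MeasurableSpace.comap (v i) (borel ℝ)]) ω ∂μ
        ≤ ∫ ω, ((1 - α k) * v k ω + μseq k) ∂μ := by
          apply integral_mono_ae integrable_condExp
            (((hint k).const_mul _).add (integrable_const _)) (hrec k)
      _ = (1 - α k) * ek k + μseq k := by
          rw [integral_add ((hint k).const_mul _) (integrable_const _),
            integral_const_mul, integral_const]
          simp [hek_def]
  have hL1 : Tendsto ek atTop (nhds 0) := det_lemma ek α μseq hek0 hα hμ hekrec hαsum hμsum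
  refine ⟨?_, hL1⟩
  -- a.s. convergence
  set S : ℝ := ∑' k, μseq k with hS_def
  set M : ℕ → ℝ := fun k => ∑ j ∈ Finset.range k, μseq j with hM_def
  have hMS : ∀ k, M k ≤ S := fun k => sum_le_hasSum _ (fun i _ => hμ i) hμsum.hasSum
  have hM0 : ∀ k, 0 ≤ M k := fun k => Finset.sum_nonneg fun j _ => hμ j
  have hMtend : Tendsto M atTop (nhds S) := hμsum.hasSum.tendsto_sum_nat
  set w : ℕ → Ω → ℝ := fun k ω => v k ω + (S - M k) with hw_def
  have hintw : ∀ k, Integrable (w k) μ := fun k => (hint k).add (integrable_const _)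
  -- filtration
  let F : Filtration ℕ ‹MeasurableSpace Ω› :=
    { seq := fun k => ⨆ i ∈ Finset.range (k+1), MeasurableSpace.comap (v i) (borel ℝ)
      mono' := fun k l hkl => by
        apply iSup₂_le; intro i hi
        apply le_iSup₂ (f := fun i (_ : i ∈ Finset.range (l+1)) =>
          MeasurableSpace.comap (v i) (borel ℝ)) i
        exact Finset.mem_range.2 (lt_of_lt_of_le (Finset.mem_range.1 hi) (by omega))
      le' := hm }
  have hadp : StronglyAdapted F w := by
    intro k
    have h1 : Measurable[MeasurableSpace.comap (v k) (borel ℝ)] (v k) := by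
      rw [hb]; exact Measurable.of_comap_le le_rfl
    have h2 : Measurable[F k] (v k) := by
      apply h1.mono _ le_rfl
      exact le_iSup₂ (f := fun i (_ : i ∈ Finset.range (k+1)) =>
        MeasurableSpace.comap (v i) (borel ℝ)) k (Finset.self_mem_range_succ k)
    exact (h2.add_const _).stronglyMeasurable
  have hstep : ∀ k, μ[w (k+1) | F k] ≤ᵐ[μ] w k := by
    intro k
    have hadd : μ[w (k+1) | F k] =ᵐ[μ]
        μ[v (k+1) | F k] + μ[(fun _ => S - M (k+1)) | F k] :=
      condExp_add (hint _) (integrable_const _) _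
    have hconst : μ[(fun _ => S - M (k+1)) | F k] = fun _ => S - M (k+1) :=
      condExp_const (F.le k) _
    rw [hconst] at hadd
    filter_upwards [hadd, hrec k, hnonneg k] with ω h4 h1 h2
    have h6 : (μ[w (k+1) | F k]) ω = (μ[v (k+1) | F k]) ω + (S - M (k+1)) := h4
    have h1' : (μ[v (k+1) | F k]) ω ≤ (1 - α k) * v k ω + μseq k := h1
    have h3 : (1 - α k) * v k ω ≤ v k ω := by nlinarith [(hα k).1]
    have hMk : M (k+1) = M k + μseq k := Finset.sum_range_succ _ _
    show (μ[w (k+1) | F k]) ω ≤ v k ω + (S - M k)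
    linarith
  have hsuper : Supermartingale w F μ := supermartingale_nat hadp hintw hstep
  -- L1 bound
  have hwnn : ∀ n, 0 ≤ᵐ[μ] w n := by
    intro n
    filter_upwards [hnonneg n] with ω hω
    have := hMS n
    simp only [Pi.zero_apply, hw_def]
    linarith
  have hekb : ∀ n, ek n ≤ ek 0 + M n := by
    intro n
    induction n with
    | zero => simp [hM_def]
    | succ n ih =>
      have := hekrec n
      have h3 : (1 - α n) * ek n ≤ ek n := by nlinarith [(hα n).1, hek0 n]
      have hMk : M (n+1) = M n + μseq n := Finset.sum_range_succ _ _
      rw [hMk]; linarith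
  have hwint : ∀ n, ∫ ω, w n ω ∂μ ≤ ek 0 + S := by
    intro n
    have : ∫ ω, w n ω ∂μ = ek n + (S - M n) := by
      simp only [hw_def]
      rw [integral_add (hint n) (integrable_const _), integral_const]
      simp [hek_def]
    rw [this]
    linarith [hekb n, hMS n]
  set R : NNReal := (ek 0 + S).toNNReal with hR_def
  have hbdd : ∀ n, eLpNorm ((-w) n) 1 μ ≤ (R : ENNReal) := by
    intro n
    have h1 : eLpNorm ((-w) n) 1 μ = eLpNorm (w n) 1 μ := by
      simp only [Pi.neg_apply]
      exact eLpNorm_neg (f := w n) (p := 1) (μ := μ)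
    rw [h1, eLpNorm_one_eq_lintegral_enorm,
      ← ofReal_integral_norm_eq_lintegral_enorm (hintw n)]
    have h2 : ∫ ω, ‖w n ω‖ ∂μ = ∫ ω, w n ω ∂μ := by
      apply integral_congr_ae
      filter_upwards [hwnn n] with ω hω
      exact Real.norm_of_nonneg hω
    rw [h2]
    exact ENNReal.ofReal_le_ofReal (hwint n)
  have hconv := hsuper.neg.exists_ae_tendsto_of_bdd hbdd
  -- liminf argument
  have hlint : ∀ n, ∫⁻ ω, ENNReal.ofReal (v n ω) ∂μ = ENNReal.ofReal (ek n) :=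
    fun n => (ofReal_integral_eq_lintegral_ofReal (hint n) (hnonneg n)).symm
  have hlim0 : Tendsto (fun n => ∫⁻ ω, ENNReal.ofReal (v n ω) ∂μ) atTop (nhds 0) := by
    simp_rw [hlint]
    have : Tendsto (fun n => ENNReal.ofReal (ek n)) atTop (nhds (ENNReal.ofReal 0)) :=
      (ENNReal.continuous_ofReal.tendsto 0).comp hL1
    simpa using this
  have hliminf : ∫⁻ ω, Filter.liminf (fun n => ENNReal.ofReal (v n ω)) atTop ∂μ = 0 := by
    have h1 := lintegral_liminf_le (fun n => (hmeas n).ennreal_ofReal) (μ := μ) (u := atTop)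
    have h2 : Filter.liminf (fun n => ∫⁻ ω, ENNReal.ofReal (v n ω) ∂μ) atTop = 0 :=
      hlim0.liminf_eq
    rw [h2] at h1
    exact le_antisymm h1 zero_le
  have hae0 : ∀ᵐ ω ∂μ, Filter.liminf (fun n => ENNReal.ofReal (v n ω)) atTop = 0 := by
    have h := (lintegral_eq_zero_iff
      (Measurable.liminf fun n => (hmeas n).ennreal_ofReal)).1 hliminf
    filter_upwards [h] with ω hω
    simpa using hω
  have hSM0 : Tendsto (fun n => S - M n) atTop (nhds 0) := by
    have := hMtend.const_sub S
    simpa using this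
  filter_upwards [hconv, hae0, ae_all_iff.2 hnonneg] with ω hc h0 hvn
  obtain ⟨c, hc⟩ := hc
  -- w n ω → -c, v n ω → -c
  have hw_tend : Tendsto (fun n => w n ω) atTop (nhds (-c)) := by
    have := hc.neg
    simpa using this
  have hv_tend : Tendsto (fun n => v n ω) atTop (nhds (-c)) := by
    have h1 : Tendsto (fun n => w n ω - (S - M n)) atTop (nhds (-c - 0)) := hw_tend.sub hSM0
    simpa [hw_def] using h1
  have hcge : 0 ≤ -c := le_of_tendsto_of_tendsto' tendsto_const_nhds hv_tend fun n => hvn n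
  have hofreal : Tendsto (fun n => ENNReal.ofReal (v n ω)) atTop (nhds (ENNReal.ofReal (-c))) :=
    (ENNReal.continuous_ofReal.tendsto _).comp hv_tend
  have hlimeq : ENNReal.ofReal (-c) = 0 := by rw [← h0]; exact hofreal.liminf_eq.symm
  have : -c ≤ 0 := ENNReal.ofReal_eq_zero.1 hlimeq
  have hc0 : -c = 0 := le_antisymm this hcge
  rw [hc0] at hv_tend
  exact hv_tend
end

section
/- Let $c > 0$ and let $\{\gamma_k\}$ be defined recursively by $\gamma_{k+1} = \gamma_k(1 - c\gamma_k)$ with $0 < \gamma_0 < 1/c$. Then $\sum_{k=0}^{\infty} \gamma_k = \infty$ and $\sum_{k=0}^{\infty} \gamma_k^2 < \infty$. -/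
theorem stmt_4 (c : ℝ) (hc : 0 < c) (γ : ℕ → ℝ)
    (hrec : ∀ k, γ (k+1) = γ k * (1 - c * γ k))
    (h0 : 0 < γ 0) (h0' : γ 0 < 1 / c) :
    ¬ Summable γ ∧ Summable (fun k => (γ k)^2) := by
  have hc0 : c * γ 0 < 1 := by
    have := (lt_div_iff₀ hc).mp h0'
    linarith
  have key : ∀ n, 0 < γ n ∧ γ n ≤ γ 0 := by
    intro n
    induction n with
    | zero => exact ⟨h0, le_refl _⟩
    | succ k ih =>
      obtain ⟨hpos, hle⟩ := ih
      have h1 : c * γ k < 1 := by nlinarith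
      rw [hrec k]
      constructor
      · nlinarith
      · nlinarith [mul_nonneg (mul_nonneg hc.le hpos.le) hpos.le]
  have hsq : Summable (fun k => (γ k)^2) := by
    apply summable_of_sum_range_le (c := γ 0 / c)
    · intro n; positivity
    · intro n
      have hk : ∀ k, (γ k)^2 = (γ k - γ (k+1)) / c := by
        intro k
        rw [hrec k]
        field_simp
        ring
      calc ∑ k ∈ Finset.range n, (γ k)^2
          = ∑ k ∈ Finset.range n, (γ k - γ (k+1))/c := by simp_rw [hk]
        _ = (γ 0 - γ n)/c := by rw [← Finset.sum_div, Finset.sum_range_sub' γ n]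
        _ ≤ γ 0 / c := by
            have := (key n).1
            gcongr
            linarith
  refine ⟨?_, hsq⟩
  set A := 1 / γ 0 with hAdef
  set B := c / (1 - c * γ 0) with hBdef
  have hA : 0 < A := by positivity
  have hB : 0 < B := div_pos hc (by linarith)
  have hlow : ∀ n : ℕ, 1 / γ n ≤ A + B * n := by
    intro n
    induction n with
    | zero => simp [hAdef]
    | succ k ih =>
      have hpos := (key k).1
      have hle := (key k).2
      have h2 : 0 < 1 - c * γ k := by nlinarith
      have heq : 1 / γ (k+1) = 1 / γ k + c / (1 - c * γ k) := by
        rw [hrec k]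
        field_simp
        rw [one_add_div (by rw [mul_comm]; exact h2.ne')]
        ring
      have h3 : c / (1 - c * γ k) ≤ B := by
        rw [hBdef, div_le_div_iff₀ h2 (by linarith)]
        nlinarith [mul_le_mul_of_nonneg_left hle (mul_pos hc hc).le]
      push_cast
      rw [heq]
      linarith
  have hgl : ∀ n : ℕ, 1 / (A + B * n) ≤ γ n := by
    intro n
    have hpos := (key n).1
    have hd : 0 < A + B * n := by positivity
    rw [div_le_iff₀ hd]
    have := hlow n
    rw [div_le_iff₀ hpos] at this
    nlinarith
  intro hsum
  have h1 : Summable (fun n : ℕ => 1 / (A + B * n)) := by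
    apply hsum.of_nonneg_of_le
    · intro n; positivity
    · exact hgl
  have h2 : Summable (fun n : ℕ => 1 / ((A + B) * (n+1))) := by
    apply h1.of_nonneg_of_le
    · intro n; positivity
    · intro n
      rw [div_le_div_iff₀ (by positivity) (by positivity)]
      have hn : (0:ℝ) ≤ (n:ℝ) := Nat.cast_nonneg n
      nlinarith
  have h3 : Summable (fun n : ℕ => 1 / ((n:ℝ)+1)) := by
    have h2' : Summable (fun n : ℕ => (A+B)⁻¹ * (1 / ((n:ℝ)+1))) := by
      simpa [one_div, mul_inv, mul_comm] using h2
    have := (summable_mul_left_iff (f := fun n : ℕ => 1 / ((n:ℝ)+1))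
      (show (A+B)⁻¹ ≠ 0 by positivity)).mp h2'
    exact this
  have h4 : Summable (fun n : ℕ => 1 / (n:ℝ)) := by
    rw [← summable_nat_add_iff 1]
    simpa using h3
  exact Real.not_summable_one_div_natCast h4
end

section
/- Let $e_0 > 0$, $a > 0$, $b > 0$, and define $\delta_0^* = \frac{a}{2b} e_0$, $\delta_k^* = \delta_{k-1}^* (1 - \frac{a}{2} \delta_{k-1}^*)$ for $k \ge 1$, and $e_{k+1}(\delta_0,\ldots,\delta_k) = (1 - a \delta_k) e_k(\delta_0,\ldots,\delta_{k-1}) + b \delta_k^2$. Then $e_k(\delta_0^*, \ldots, \delta_{k-1}^*) = \frac{2b}{a} \delta_k^*$ for all $k \ge 0$. -/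
theorem stmt_6 (a b e0 : ℝ) (ha : 0 < a) (hb : 0 < b) (he0 : 0 < e0)
    (δ : ℕ → ℝ) (hδ0 : δ 0 = a / (2 * b) * e0)
    (hδ : ∀ k, δ (k+1) = δ k * (1 - a / 2 * δ k))
    (e : ℕ → ℝ) (he : e 0 = e0)
    (herec : ∀ k, e (k+1) = (1 - a * δ k) * e k + b * (δ k)^2) :
    ∀ k, e k = (2 * b / a) * δ k := by
  intro k
  induction k with
  | zero =>
    rw [he, hδ0]
    field_simp
  | succ n ih =>
    rw [herec, ih, hδ]
    field_simp
    ring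
end

section
/- Let $a > 0$, $b > 0$, $e_0 > 0$, and define error functions recursively by $e_{k+1}(\delta_0,\ldots,\delta_k) = (1 - a\delta_k) e_k(\delta_0,\ldots,\delta_{k-1}) + b\delta_k^2$. Let $\delta_0^* = \frac{a}{2b} e_0$ and $\delta_k^* = \delta_{k-1}^*(1 - \frac{a}{2}\delta_{k-1}^*)$. Suppose $U > 0$ is such that $\delta_0^* \le U$ and $U \le 1/a$. Then for every $k \ge 1$ and every $(\delta_0,\ldots,\delta_{k-1})$ with $0 < \delta_j \le U$ for all $j$, we have $e_k(\delta_0,\ldots,\delta_{k-1}) - e_k(\delta_0^*,\ldots,\delta_{k-1}^*) \ge b (\delta_{k-1} - \delta_{k-1}^*)^2$. -/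
theorem stmt_7 (a b e0 U : ℝ) (ha : 0 < a) (hb : 0 < b) (he0 : 0 < e0) (hU : 0 < U)
    (e : (ℕ → ℝ) → ℕ → ℝ)
    (he0' : ∀ δ, e δ 0 = e0)
    (herec : ∀ δ k, e δ (k+1) = (1 - a * δ k) * e δ k + b * (δ k)^2)
    (δs : ℕ → ℝ) (hδs0 : δs 0 = a / (2 * b) * e0)
    (hδs : ∀ k, δs (k+1) = δs k * (1 - a / 2 * δs k))
    (hU1 : δs 0 ≤ U) (hU2 : U ≤ 1 / a) :
    ∀ k ≥ 1, ∀ δ : ℕ → ℝ, (∀ j < k, 0 < δ j ∧ δ j ≤ U) →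
      b * (δ (k-1) - δs (k-1))^2 ≤ e δ k - e δs k := by
  -- a * e δs k = 2b * δs k
  have hstar : ∀ k, a * e δs k = 2 * b * δs k := by
    intro k
    induction k with
    | zero =>
      rw [he0', hδs0]
      field_simp
    | succ k ih =>
      rw [herec, hδs k]
      linear_combination (1 - a * δs k) * ih
  -- key step: quadratic lower bound given e δs k ≤ e δ k
  have key : ∀ k, ∀ δ : ℕ → ℝ, 0 < δ k → δ k ≤ U → e δs k ≤ e δ k →
      b * (δ k - δs k)^2 ≤ e δ (k+1) - e δs (k+1) := by
    intro k δ hpos hle hmono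
    have hle1 : a * δ k ≤ 1 := by
      have h := mul_le_mul_of_nonneg_left (hle.trans hU2) ha.le
      rwa [mul_one_div, div_self (ne_of_gt ha)] at h
    have h1 : (0:ℝ) ≤ 1 - a * δ k := by linarith
    have h2 : (1 - a * δ k) * e δs k ≤ (1 - a * δ k) * e δ k :=
      mul_le_mul_of_nonneg_left hmono h1
    have hE2 : (δ k - δs k) * (a * e δs k) = (δ k - δs k) * (2 * b * δs k) := by
      rw [hstar k]
    rw [herec δ, herec δs]
    nlinarith [h2, hE2]
  -- monotonicity: e δs k ≤ e δ k
  have mono : ∀ k, ∀ δ : ℕ → ℝ, (∀ j < k, 0 < δ j ∧ δ j ≤ U) → e δs k ≤ e δ k := by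
    intro k
    induction k with
    | zero => intro δ _; rw [he0', he0']
    | succ k ih =>
      intro δ hδ
      have hk := hδ k (Nat.lt_succ_self k)
      have hkey := key k δ hk.1 hk.2 (ih δ (fun j hj => hδ j (hj.trans (Nat.lt_succ_self k))))
      nlinarith [mul_nonneg hb.le (sq_nonneg (δ k - δs k))]
  intro k hk δ hδ
  obtain ⟨m, rfl⟩ : ∃ m, k = m + 1 := ⟨k - 1, (Nat.succ_pred_eq_of_pos hk).symm⟩
  have hm := hδ m (Nat.lt_succ_self m)
  simpa using key m δ hm.1 hm.2 (mono m δ (fun j hj => hδ j (hj.trans (Nat.lt_succ_self m))))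
end

section
/- Let $f : \mathbb{R}^n \to \mathbb{R}$ be convex and let $z$ be a random vector with an absolutely continuous distribution with respect to Lebesgue measure on $\mathbb{R}^n$ such that $E[f(x - z)] < \infty$ for all $x$. Then the smoothed function $f^\epsilon(x) := E[f(x - z)]$ is differentiable everywhere on $\mathbb{R}^n$. -/
open MeasureTheory Metric Set

namespace Stmt12Aux

variable {n : ℕ}

private lemma sum_single (u : EuclideanSpace ℝ (Fin n)) :
    (∑ i, u i • EuclideanSpace.single i (1:ℝ)) = u := by
  have := (EuclideanSpace.basisFun (Fin n) ℝ).toBasis.sum_repr u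
  simpa [EuclideanSpace.basisFun_repr] using this

private lemma coord_le_norm (u : EuclideanSpace ℝ (Fin n)) (i : Fin n) : |u i| ≤ ‖u‖ := by
  have h1 : (inner ℝ (EuclideanSpace.single i (1:ℝ)) u : ℝ) = u i := by
    simp [EuclideanSpace.inner_single_left]
  calc |u i| = |(inner ℝ (EuclideanSpace.single i (1:ℝ)) u : ℝ)| := by rw [h1]
    _ ≤ ‖EuclideanSpace.single i (1:ℝ)‖ * ‖u‖ := abs_real_inner_le_norm _ _
    _ = ‖u‖ := by simp [EuclideanSpace.norm_single]

private lemma convex_le_avg (hn : 0 < n) {f : EuclideanSpace ℝ (Fin n) → ℝ}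
    (hf : ConvexOn ℝ Set.univ f) (c a : EuclideanSpace ℝ (Fin n)) (ha : a ∈ ball c 2) :
    f a ≤ (1/(n:ℝ)) * ∑ i, max (f (c - (2*(n:ℝ)) • EuclideanSpace.single i 1))
      (f (c + (2*(n:ℝ)) • EuclideanSpace.single i 1)) := by
  have hnR : (0:ℝ) < n := Nat.cast_pos.2 hn
  set r : ℝ := 2*(n:ℝ) with hr
  have hrpos : 0 < r := by positivity
  set u := a - c with hu
  have hun : ‖u‖ < 2 := by rwa [hu, ← dist_eq_norm, ← mem_ball]
  have key : ∀ i, f (c + ((n:ℝ) * u i) • EuclideanSpace.single i 1) ≤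
      max (f (c - r • EuclideanSpace.single i 1)) (f (c + r • EuclideanSpace.single i 1)) := by
    intro i
    set e : EuclideanSpace ℝ (Fin n) := EuclideanSpace.single i 1 with he
    set t : ℝ := (n:ℝ) * u i with htdef
    have ht : |t| ≤ r := by
      rw [htdef, abs_mul, abs_of_nonneg hnR.le, hr]
      have hcn := coord_le_norm u i
      nlinarith
    obtain ⟨ht1, ht2⟩ := abs_le.1 ht
    set θ₁ : ℝ := (r - t)/(2*r) with hθ₁
    set θ₂ : ℝ := (r + t)/(2*r) with hθ₂
    have h1 : 0 ≤ θ₁ := div_nonneg (by linarith) (by linarith)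
    have h2 : 0 ≤ θ₂ := div_nonneg (by linarith) (by linarith)
    have hsum : θ₁ + θ₂ = 1 := by
      rw [hθ₁, hθ₂]; field_simp; ring
    have h3 : θ₂ * r - θ₁ * r = t := by
      rw [hθ₁, hθ₂]; field_simp; ring
    have hcombo : θ₁ • (c - r • e) + θ₂ • (c + r • e) = c + t • e := by
      calc θ₁ • (c - r • e) + θ₂ • (c + r • e)
          = (θ₁ + θ₂) • c + (θ₂ * r - θ₁ * r) • e := by
            rw [smul_sub, smul_add, smul_smul, smul_smul, add_smul, sub_smul]; abel
        _ = c + t • e := by rw [hsum, one_smul, h3]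
    calc f (c + t • e) = f (θ₁ • (c - r • e) + θ₂ • (c + r • e)) := by rw [hcombo]
      _ ≤ θ₁ * f (c - r • e) + θ₂ * f (c + r • e) :=
          hf.2 (mem_univ _) (mem_univ _) h1 h2 hsum
      _ ≤ θ₁ * max (f (c - r • e)) (f (c + r • e)) + θ₂ * max (f (c - r • e)) (f (c + r • e)) := by
          gcongr
          exacts [le_max_left _ _, le_max_right _ _]
      _ = max (f (c - r • e)) (f (c + r • e)) := by rw [← add_mul, hsum, one_mul]
  have hsum_eq : (∑ i, (1/(n:ℝ)) • (c + ((n:ℝ) * u i) • EuclideanSpace.single i (1:ℝ))) = a := by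
    simp only [smul_add, smul_smul]
    rw [Finset.sum_add_distrib]
    have c1 : (∑ _i : Fin n, (1/(n:ℝ)) • c) = c := by
      rw [Finset.sum_const, Finset.card_univ, Fintype.card_fin,
        ← Nat.cast_smul_eq_nsmul ℝ, smul_smul]
      rw [show (n:ℝ) * (1/(n:ℝ)) = 1 by field_simp, one_smul]
    have c2 : (∑ i, ((1/(n:ℝ)) * ((n:ℝ) * u i)) • EuclideanSpace.single i (1:ℝ)) = u := by
      have heq : ∀ i : Fin n, (1/(n:ℝ)) * ((n:ℝ) * u i) = u i := fun i => by field_simp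
      simp_rw [heq]
      exact sum_single u
    rw [c1, c2, hu, add_sub_cancel]
  have hj := hf.map_sum_le (t := Finset.univ) (w := fun _ : Fin n => 1/(n:ℝ))
    (p := fun i => c + ((n:ℝ) * u i) • EuclideanSpace.single i (1:ℝ))
    (fun i _ => by positivity)
    (by rw [Finset.sum_const, Finset.card_univ, Fintype.card_fin, nsmul_eq_mul]; field_simp)
    (fun i _ => mem_univ _)
  rw [hsum_eq] at hj
  calc f a ≤ ∑ i, (1/(n:ℝ)) • f (c + ((n:ℝ) * u i) • EuclideanSpace.single i (1:ℝ)) := hj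
    _ ≤ ∑ i, (1/(n:ℝ)) * max (f (c - r • EuclideanSpace.single i 1))
        (f (c + r • EuclideanSpace.single i 1)) := by
        apply Finset.sum_le_sum
        intro i _
        rw [smul_eq_mul]
        exact mul_le_mul_of_nonneg_left (key i) (by positivity)
    _ = (1/(n:ℝ)) * ∑ i, max (f (c - r • EuclideanSpace.single i 1))
        (f (c + r • EuclideanSpace.single i 1)) := (Finset.mul_sum _ _ _).symm

private lemma convex_abs_le (hn : 0 < n) {f : EuclideanSpace ℝ (Fin n) → ℝ}
    (hf : ConvexOn ℝ Set.univ f) (c a : EuclideanSpace ℝ (Fin n)) (ha : a ∈ ball c 2) :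
    |f a| ≤ |(1/(n:ℝ)) * ∑ i, max (f (c - (2*(n:ℝ)) • EuclideanSpace.single i 1))
      (f (c + (2*(n:ℝ)) • EuclideanSpace.single i 1))| + 2 * |f c| := by
  set U : ℝ := (1/(n:ℝ)) * ∑ i, max (f (c - (2*(n:ℝ)) • EuclideanSpace.single i 1))
      (f (c + (2*(n:ℝ)) • EuclideanSpace.single i 1)) with hU
  have hupper : f a ≤ U := convex_le_avg hn hf c a ha
  have hrefl : (2:ℝ) • c - a ∈ ball c 2 := by
    rw [mem_ball, dist_eq_norm]
    have h : (2:ℝ) • c - a - c = -(a - c) := by module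
    rw [h, norm_neg, ← dist_eq_norm]
    rwa [mem_ball] at ha
  have hupper' : f ((2:ℝ) • c - a) ≤ U := convex_le_avg hn hf c _ hrefl
  have hmid : f c ≤ (1/2) * f a + (1/2) * f ((2:ℝ) • c - a) := by
    have hco : (1/2 : ℝ) • a + (1/2 : ℝ) • ((2:ℝ) • c - a) = c := by module
    have := hf.2 (mem_univ a) (mem_univ ((2:ℝ) • c - a)) (by norm_num) (by norm_num)
      (by norm_num : (1/2 : ℝ) + 1/2 = 1)
    rwa [hco] at this
  have hlower : 2 * f c - U ≤ f a := by nlinarith [hupper']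
  rw [abs_le]
  constructor
  · have h1 : -(|U| + 2*|f c|) ≤ 2 * f c - U := by
      have := abs_le.1 (le_refl |f c|)
      have h2 := neg_abs_le (f c)
      have h3 := le_abs_self U
      linarith
    linarith
  · have := le_abs_self U
    have h2 := abs_nonneg (f c)
    linarith

private lemma ae_diff {f : EuclideanSpace ℝ (Fin n) → ℝ} (hf : ConvexOn ℝ Set.univ f) :
    ∀ᵐ y ∂(volume : Measure (EuclideanSpace ℝ (Fin n))), DifferentiableAt ℝ f y := by
  have hcont : Continuous f := hf.locallyLipschitz.continuous
  have key : ∀ m : ℕ, ∀ᵐ y ∂(volume : Measure (EuclideanSpace ℝ (Fin n))),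
      y ∈ ball (0 : EuclideanSpace ℝ (Fin n)) (m+1) → DifferentiableAt ℝ f y := by
    intro m
    obtain ⟨K, hK⟩ : ∃ K, LipschitzOnWith K f (ball (0 : EuclideanSpace ℝ (Fin n)) (m+1)) := by
      apply ConvexOn.exists_lipschitzOnWith_of_isBounded
        (hf.subset (subset_univ _) (convex_ball _ _))
        (show ((m:ℝ)+1) < (m:ℝ)+2 by linarith)
      exact (((isCompact_closedBall (0 : EuclideanSpace ℝ (Fin n)) ((m:ℝ)+2)).image
        hcont).isBounded).subset (image_mono ball_subset_closedBall)
    filter_upwards [hK.ae_differentiableWithinAt_of_mem] with y hy hmem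
    exact (hy hmem).differentiableAt ((isOpen_ball).mem_nhds hmem)
  rw [← ae_all_iff] at key
  filter_upwards [key] with y hy
  obtain ⟨m, hm⟩ := exists_nat_gt ‖y‖
  exact hy m (mem_ball_zero_iff.2 (by linarith))

end Stmt12Aux

open Stmt12Aux in
theorem stmt_12 {n : ℕ} (f : EuclideanSpace ℝ (Fin n) → ℝ)
    (hf : ConvexOn ℝ Set.univ f)
    (μ : Measure (EuclideanSpace ℝ (Fin n))) [IsProbabilityMeasure μ]
    (hac : μ ≪ volume)
    (hint : ∀ x, Integrable (fun z => f (x - z)) μ) :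
    Differentiable ℝ (fun x => ∫ z, f (x - z) ∂μ) := by
  rcases Nat.eq_zero_or_pos n with hn | hn
  · subst hn
    have : Subsingleton (EuclideanSpace ℝ (Fin 0)) :=
      ⟨fun a b => PiLp.ext fun i => i.elim0⟩
    have heq : (fun x : EuclideanSpace ℝ (Fin 0) => ∫ z, f (x - z) ∂μ) =
        fun _ => ∫ z, f (0 - z) ∂μ := funext fun x => by rw [Subsingleton.elim x 0]
    rw [heq]
    exact differentiable_const _
  intro x₀
  have hcont : Continuous f := hf.locallyLipschitz.continuous
  set r : ℝ := 2*(n:ℝ) with hr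
  set U : EuclideanSpace ℝ (Fin n) → ℝ := fun z =>
    ∑ i, max (f ((x₀ - r • EuclideanSpace.single i 1) - z))
      (f ((x₀ + r • EuclideanSpace.single i 1) - z)) with hUdef
  set M : EuclideanSpace ℝ (Fin n) → ℝ := fun z => |(1/(n:ℝ)) * U z| + 2 * |f (x₀ - z)| with hMdef
  have hM0 : ∀ z, 0 ≤ M z := fun z => by positivity
  have hUshift : ∀ z i, (x₀ - z) - r • EuclideanSpace.single i 1
      = (x₀ - r • EuclideanSpace.single i 1) - z := fun z i => by module
  have hUshift' : ∀ z i, (x₀ - z) + r • EuclideanSpace.single i 1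
      = (x₀ + r • EuclideanSpace.single i 1) - z := fun z i => by module
  -- abs bound on balls
  have habs : ∀ z, ∀ a ∈ ball (x₀ - z) 2, |f a| ≤ M z := by
    intro z a ha
    have := convex_abs_le hn hf (x₀ - z) a ha
    simp only [← hr, hUshift, hUshift'] at this
    exact this
  -- Lipschitz property
  have hlip : ∀ z, LipschitzOnWith (Real.nnabs (2 * M z)) (fun x => f (x - z)) (ball x₀ 1) := by
    intro z
    have hK := (hf.subset (subset_univ _) (convex_ball (x₀ - z) 2)).lipschitzOnWith_of_abs_le
      (show (0:ℝ) < 1 by norm_num) (M := M z) (fun a ha => habs z a (mem_ball.2 ha))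
    have h21 : (2:ℝ) - 1 = 1 := by norm_num
    rw [h21] at hK
    rw [div_one] at hK
    rw [Real.nnabs_of_nonneg (by positivity : (0:ℝ) ≤ 2 * M z)]
    rw [lipschitzOnWith_iff_dist_le_mul] at hK ⊢
    intro x hx y hy
    have hx' : x - z ∈ ball (x₀ - z) 1 := by
      rw [mem_ball] at hx ⊢
      rwa [dist_sub_right]
    have hy' : y - z ∈ ball (x₀ - z) 1 := by
      rw [mem_ball] at hy ⊢
      rwa [dist_sub_right]
    have := hK _ hx' _ hy'
    rwa [dist_sub_right] at this
  -- integrability of the bound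
  have hUint : Integrable U μ := by
    apply integrable_finset_sum
    intro i _
    have h1 := hint (x₀ - r • EuclideanSpace.single i 1)
    have h2 := hint (x₀ + r • EuclideanSpace.single i 1)
    exact h1.sup h2
  have hbound_int : Integrable (fun z => 2 * M z) μ := by
    apply Integrable.const_mul
    exact ((hUint.const_mul (1/(n:ℝ))).abs.add ((hint x₀).abs.const_mul 2))
  -- ae differentiability
  have hN : ∀ᵐ z ∂μ, DifferentiableAt ℝ f (x₀ - z) := by
    have h1 := ae_diff hf
    rw [ae_iff] at h1
    have h3 : volume ((fun z : EuclideanSpace ℝ (Fin n) => x₀ - z) ⁻¹'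
        {y | ¬ DifferentiableAt ℝ f y}) = 0 :=
      (MeasureTheory.Measure.measurePreserving_sub_left volume x₀).quasiMeasurePreserving.preimage_null h1
    rw [ae_iff]
    exact hac h3
  -- derivative
  have h_diff : ∀ᵐ z ∂μ, HasFDerivAt (fun x => f (x - z)) (fderiv ℝ f (x₀ - z)) x₀ := by
    filter_upwards [hN] with z hz
    have h2 : HasFDerivAt (fun x : EuclideanSpace ℝ (Fin n) => x - z)
        (ContinuousLinearMap.id ℝ (EuclideanSpace ℝ (Fin n))) x₀ := (hasFDerivAt_id x₀).sub_const z
    have := hz.hasFDerivAt.comp x₀ h2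
    exact this
  have hF'_meas : AEStronglyMeasurable (fun z => fderiv ℝ f (x₀ - z)) μ :=
    ((measurable_fderiv ℝ f).comp (measurable_const.sub measurable_id)).aestronglyMeasurable
  have hF_meas : ∀ᶠ x in nhds x₀, AEStronglyMeasurable (fun z => f (x - z)) μ :=
    Filter.Eventually.of_forall fun x =>
      (hcont.comp (continuous_const.sub continuous_id)).aestronglyMeasurable
  obtain ⟨-, hder⟩ := hasFDerivAt_integral_of_dominated_loc_of_lip
    (bound := fun z => 2 * M z) (ball_mem_nhds x₀ one_pos) hF_meas (hint x₀) hF'_meas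
    (Filter.Eventually.of_forall hlip) hbound_int h_diff
  exact hder.differentiableAt
end

section
/- Let $z$ be uniformly distributed on the cube $\prod_{i=1}^N C_{n_i}(0, \epsilon_i) \subset \mathbb{R}^n$ (where $C_{n_i}(0,\epsilon_i) = \{u \in \mathbb{R}^{n_i} : \|u\|_\infty \le \epsilon_i\}$ and $n = \sum_i n_i$), with density $p_c$. Then for all $x, y \in \mathbb{R}^n$, $\int_{\mathbb{R}^n} |p_c(u - x) - p_c(u - y)| \, du \le \frac{\sqrt{n}}{\min_{1 \le i \le N} \epsilon_i} \|x - y\|$, where $\|\cdot\|$ is the Euclidean norm. -/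
open MeasureTheory

private lemma one_sub_prod_le_sum_one_sub {ι : Type*} (s : Finset ι) (r : ι → ℝ)
    (h0 : ∀ j, 0 ≤ r j) (h1 : ∀ j, r j ≤ 1) :
    1 - ∏ j ∈ s, r j ≤ ∑ j ∈ s, (1 - r j) := by
  induction s using Finset.cons_induction with
  | empty => simp
  | cons a s ha ih =>
    rw [Finset.prod_cons, Finset.sum_cons]
    have hP0 : 0 ≤ ∏ j ∈ s, r j := Finset.prod_nonneg fun j _ => h0 j
    have hP1 : ∏ j ∈ s, r j ≤ 1 := Finset.prod_le_one (fun j _ => h0 j) (fun j _ => h1 j)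
    nlinarith [h0 a, h1 a]

private lemma min_sub_max (a b c : ℝ) :
    min (a + c) (b + c) - max (a - c) (b - c) = 2 * c - |a - b| := by
  rcases le_total a b with h | h
  · rw [min_eq_left (by linarith), max_eq_right (by linarith), abs_of_nonpos (by linarith)]
    ring
  · rw [min_eq_right (by linarith), max_eq_left (by linarith), abs_of_nonneg (by linarith)]
    ring

theorem stmt_13 {n N : ℕ} [NeZero N] (d : Fin n → Fin N) (ε : Fin N → ℝ)
    (hε : ∀ i, 0 < ε i)
    (p : EuclideanSpace ℝ (Fin n) → ℝ)
    (hp : ∀ z, p z = if ∀ j, |z j| ≤ ε (d j) then (∏ j, (2 * ε (d j)))⁻¹ else 0)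
    (x y : EuclideanSpace ℝ (Fin n)) :
    ∫ u, |p (u - x) - p (u - y)| ≤
      (Real.sqrt n / (Finset.univ.inf' Finset.univ_nonempty ε)) * ‖x - y‖ := by
  classical
  set m := Finset.univ.inf' Finset.univ_nonempty ε with hm
  have hm0 : 0 < m := by
    rw [hm, Finset.lt_inf'_iff]
    exact fun i _ => hε i
  have hmle : ∀ i, m ≤ ε i := fun i => Finset.inf'_le _ (Finset.mem_univ i)
  set t : Fin n → ℝ := fun j => x j - y j with ht
  set V : ℝ := ∏ j, (2 * ε (d j)) with hV
  have hV0 : 0 < V := Finset.prod_pos fun j _ => mul_pos two_pos (hε _)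
  set c : ℝ := V⁻¹ with hc
  have hc0 : 0 < c := by positivity
  set e := (MeasurableEquiv.toLp 2 (Fin n → ℝ)).symm with he
  have heapp : ∀ (u : EuclideanSpace ℝ (Fin n)) j, e u j = u j := fun u j => rfl
  set Sx : Set (Fin n → ℝ) :=
    Set.univ.pi fun j => Set.Icc (x j - ε (d j)) (x j + ε (d j)) with hSx
  set Sy : Set (Fin n → ℝ) :=
    Set.univ.pi fun j => Set.Icc (y j - ε (d j)) (y j + ε (d j)) with hSy
  have hSxm : MeasurableSet Sx := MeasurableSet.univ_pi fun j => measurableSet_Icc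
  have hSym : MeasurableSet Sy := MeasurableSet.univ_pi fun j => measurableSet_Icc
  set A := e ⁻¹' Sx with hA
  set B := e ⁻¹' Sy with hB
  have hAm : MeasurableSet A := e.measurableSet_preimage.2 hSxm
  have hBm : MeasurableSet B := e.measurableSet_preimage.2 hSym
  have hmemA : ∀ u, u ∈ A ↔ ∀ j, |(u - x) j| ≤ ε (d j) := by
    intro u
    rw [hA, Set.mem_preimage, hSx, Set.mem_univ_pi]
    refine forall_congr' fun j => ?_
    rw [heapp, Set.mem_Icc]
    have h : (u - x) j = u j - x j := rfl
    rw [h, abs_le]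
    constructor <;> rintro ⟨h1, h2⟩ <;> constructor <;> linarith
  have hmemB : ∀ u, u ∈ B ↔ ∀ j, |(u - y) j| ≤ ε (d j) := by
    intro u
    rw [hB, Set.mem_preimage, hSy, Set.mem_univ_pi]
    refine forall_congr' fun j => ?_
    rw [heapp, Set.mem_Icc]
    have h : (u - y) j = u j - y j := rfl
    rw [h, abs_le]
    constructor <;> rintro ⟨h1, h2⟩ <;> constructor <;> linarith
  have hpx : ∀ u, p (u - x) = A.indicator (fun _ => c) u := by
    intro u
    rw [hp, Set.indicator_apply]
    exact if_congr (hmemA u).symm rfl rfl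
  have hpy : ∀ u, p (u - y) = B.indicator (fun _ => c) u := by
    intro u
    rw [hp, Set.indicator_apply]
    exact if_congr (hmemB u).symm rfl rfl
  -- volumes
  have hmp := (EuclideanSpace.volume_preserving_symm_measurableEquiv_toLp (Fin n))
  have hvolA : volume A = ∏ j, ENNReal.ofReal (2 * ε (d j)) := by
    rw [hA, hmp.measure_preimage hSxm.nullMeasurableSet, hSx, volume_pi_pi]
    refine Finset.prod_congr rfl fun j _ => ?_
    rw [Real.volume_Icc]
    congr 1
    ring
  have hvolB : volume B = ∏ j, ENNReal.ofReal (2 * ε (d j)) := by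
    rw [hB, hmp.measure_preimage hSym.nullMeasurableSet, hSy, volume_pi_pi]
    refine Finset.prod_congr rfl fun j _ => ?_
    rw [Real.volume_Icc]
    congr 1
    ring
  set w : Fin n → ℝ := fun j => max (2 * ε (d j) - |t j|) 0 with hw
  have hwj : ∀ j, w j = max (2 * ε (d j) - |t j|) 0 := fun j => rfl
  have hw0 : ∀ j, 0 ≤ w j := fun j => le_max_right _ _
  have hvolAB : volume (A ∩ B) = ∏ j, ENNReal.ofReal (w j) := by
    rw [hA, hB, ← Set.preimage_inter, hmp.measure_preimage
      (hSxm.inter hSym).nullMeasurableSet, hSx, hSy, ← Set.pi_inter_distrib, volume_pi_pi]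
    refine Finset.prod_congr rfl fun j _ => ?_
    rw [Set.Icc_inter_Icc, Real.volume_Icc]
    have h : (x j + ε (d j)) ⊓ (y j + ε (d j)) - (x j - ε (d j)) ⊔ (y j - ε (d j))
        = 2 * ε (d j) - |t j| := min_sub_max _ _ _
    rw [h]
    rcases le_total (2 * ε (d j) - |t j|) 0 with hle | hle
    · rw [ENNReal.ofReal_eq_zero.2 hle, hwj j, max_eq_right hle, ENNReal.ofReal_zero]
    · rw [hwj j, max_eq_left hle]
  have hVfin : (∏ j, ENNReal.ofReal (2 * ε (d j))) ≠ ⊤ :=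
    (ENNReal.prod_lt_top fun j _ => ENNReal.ofReal_lt_top).ne
  have hABfin : volume (A ∩ B) ≠ ⊤ := by
    refine ((measure_mono Set.inter_subset_left).trans_lt ?_).ne
    rw [hvolA]
    exact hVfin.lt_top
  have hdiffA : volume (A \ B) = volume A - volume (A ∩ B) := by
    rw [← Set.diff_self_inter]
    exact measure_diff Set.inter_subset_left (hAm.inter hBm).nullMeasurableSet hABfin
  have hBAeq : B ∩ A = A ∩ B := Set.inter_comm _ _
  have hdiffB : volume (B \ A) = volume B - volume (A ∩ B) := by
    rw [← Set.diff_self_inter, measure_diff Set.inter_subset_left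
      ((hBm.inter hAm).nullMeasurableSet) (by rwa [hBAeq]), hBAeq]
  set W : ℝ := ∏ j, w j with hW
  have hwle : ∀ j, w j ≤ 2 * ε (d j) := by
    intro j
    rw [hwj j]
    rcases le_total (2 * ε (d j) - |t j|) 0 with hle | hle
    · rw [max_eq_right hle]; exact (mul_pos two_pos (hε _)).le
    · rw [max_eq_left hle]; have := abs_nonneg (t j); linarith
  have hWVle : (∏ j, ENNReal.ofReal (w j)) ≤ ∏ j, ENNReal.ofReal (2 * ε (d j)) :=
    Finset.prod_le_prod' fun j _ => ENNReal.ofReal_le_ofReal (hwle j)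
  have htoV : (∏ j, ENNReal.ofReal (2 * ε (d j))).toReal = V := by
    rw [ENNReal.toReal_prod, hV]
    exact Finset.prod_congr rfl fun j _ =>
      ENNReal.toReal_ofReal (mul_pos two_pos (hε _)).le
  have htoW : (∏ j, ENNReal.ofReal (w j)).toReal = W := by
    rw [ENNReal.toReal_prod, hW]
    exact Finset.prod_congr rfl fun j _ => ENNReal.toReal_ofReal (hw0 j)
  have hdiffAr : (volume (A \ B)).toReal = V - W := by
    rw [hdiffA, hvolA, hvolAB, ENNReal.toReal_sub_of_le hWVle hVfin, htoV, htoW]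
  have hdiffBr : (volume (B \ A)).toReal = V - W := by
    rw [hdiffB, hvolB, hvolAB, ENNReal.toReal_sub_of_le hWVle hVfin, htoV, htoW]
  -- integrability of the bound
  have hfinAB : volume (A \ B) ≠ ⊤ := by
    refine ((measure_mono Set.diff_subset).trans_lt ?_).ne
    rw [hvolA]; exact hVfin.lt_top
  have hfinBA : volume (B \ A) ≠ ⊤ := by
    refine ((measure_mono Set.diff_subset).trans_lt ?_).ne
    rw [hvolB]; exact hVfin.lt_top
  have hintAB : Integrable ((A \ B).indicator fun _ => c) := by
    rw [integrable_indicator_iff (hAm.diff hBm)]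
    exact integrableOn_const hfinAB
  have hintBA : Integrable ((B \ A).indicator fun _ => c) := by
    rw [integrable_indicator_iff (hBm.diff hAm)]
    exact integrableOn_const hfinBA
  -- pointwise bound
  have hptwise : ∀ u, |p (u - x) - p (u - y)| ≤
      (A \ B).indicator (fun _ => c) u + (B \ A).indicator (fun _ => c) u := by
    intro u
    rw [hpx, hpy]
    by_cases hu : u ∈ A <;> by_cases hv : u ∈ B <;>
      simp [Set.indicator_apply, hu, hv, abs_of_nonneg hc0.le, hc0.le]
  have hstep1 : ∫ u, |p (u - x) - p (u - y)| ≤ c * (V - W) + c * (V - W) := by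
    calc ∫ u, |p (u - x) - p (u - y)|
        ≤ ∫ u, ((A \ B).indicator (fun _ => c) u + (B \ A).indicator (fun _ => c) u) := by
          apply integral_mono_of_nonneg
          · exact Filter.Eventually.of_forall fun u => abs_nonneg _
          · exact hintAB.add hintBA
          · exact Filter.Eventually.of_forall hptwise
      _ = c * (V - W) + c * (V - W) := by
          rw [integral_add hintAB hintBA, integral_indicator_const _ (hAm.diff hBm),
            integral_indicator_const _ (hBm.diff hAm), measureReal_def, measureReal_def, hdiffAr, hdiffBr, smul_eq_mul,
            mul_comm]
  refine hstep1.trans ?_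
  -- pure real arithmetic from here
  set r : Fin n → ℝ := fun j => w j / (2 * ε (d j)) with hr
  have hrj : ∀ j, r j = w j / (2 * ε (d j)) := fun j => rfl
  have hεd : ∀ j, (0:ℝ) < 2 * ε (d j) := fun j => mul_pos two_pos (hε _)
  have hr0 : ∀ j, 0 ≤ r j := fun j => div_nonneg (hw0 j) (hεd j).le
  have hr1 : ∀ j, r j ≤ 1 := fun j => by
    rw [hrj j, div_le_one (hεd j)]; exact hwle j
  have hWVr : W = V * ∏ j, r j := by
    rw [hW, hV, ← Finset.prod_mul_distrib]
    refine Finset.prod_congr rfl fun j _ => ?_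
    rw [hrj j]
    rw [← mul_div_assoc]
    exact (mul_div_cancel_left₀ (w j) (hεd j).ne').symm
  have h2 : ∀ j, 1 - r j ≤ |t j| / (2 * ε (d j)) := by
    intro j
    have hle : (2 * ε (d j) - |t j|) / (2 * ε (d j)) ≤ r j := by
      rw [hrj j]
      gcongr
      · exact (hεd j).le
      · exact le_max_left _ _
    have heq : 1 - (2 * ε (d j) - |t j|) / (2 * ε (d j)) = |t j| / (2 * ε (d j)) := by
      rw [sub_div, div_self (hεd j).ne']
      ring
    linarith
  have hcV : c * V = 1 := inv_mul_cancel₀ hV0.ne'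
  have hcVW : c * (V - W) = 1 - ∏ j, r j := by
    calc c * (V - W) = c * V * (1 - ∏ j, r j) := by rw [hWVr]; ring
      _ = 1 - ∏ j, r j := by rw [hcV, one_mul]
  have h1 : 1 - ∏ j, r j ≤ ∑ j, (1 - r j) :=
    one_sub_prod_le_sum_one_sub Finset.univ r hr0 hr1
  have h3 : (∑ j, (1 - r j)) ≤ ∑ j, |t j| / (2 * ε (d j)) :=
    Finset.sum_le_sum fun j _ => h2 j
  have hnorm : ‖x - y‖ = Real.sqrt (∑ j, |t j| ^ 2) := by
    rw [EuclideanSpace.norm_eq]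
    simp only [Real.norm_eq_abs]
    rfl
  have hCS : ∑ j, |t j| ≤ Real.sqrt n * ‖x - y‖ := by
    have h := Real.sum_mul_le_sqrt_mul_sqrt Finset.univ (fun _ => (1:ℝ)) (fun j => |t j|)
    simp only [one_mul, one_pow] at h
    rw [hnorm]
    calc ∑ j, |t j| ≤ Real.sqrt (∑ _j : Fin n, (1:ℝ)) * Real.sqrt (∑ j, |t j| ^ 2) := h
      _ = Real.sqrt n * Real.sqrt (∑ j, |t j| ^ 2) := by
          rw [Finset.sum_const, Finset.card_univ, Fintype.card_fin, nsmul_eq_mul, mul_one]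
  calc c * (V - W) + c * (V - W) = 2 * (1 - ∏ j, r j) := by rw [hcVW]; ring
    _ ≤ 2 * ∑ j, |t j| / (2 * ε (d j)) := by linarith
    _ = ∑ j, |t j| / ε (d j) := by
        rw [Finset.mul_sum]
        refine Finset.sum_congr rfl fun j _ => ?_
        have := (hε (d j)).ne'
        field_simp
    _ ≤ ∑ j, |t j| / m := Finset.sum_le_sum fun j _ =>
        div_le_div_of_nonneg_left (abs_nonneg _) hm0 (hmle (d j))
    _ = (∑ j, |t j|) / m := by rw [Finset.sum_div]
    _ ≤ (Real.sqrt n * ‖x - y‖) / m := by gcongr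
    _ = Real.sqrt n / m * ‖x - y‖ := by ring
end

section
/- Let $X \subseteq \mathbb{R}^n$ be closed and convex, $F$ continuous and strongly monotone with constant $\eta > 0$ on an enlargement of $X$, and for each $\epsilon > 0$ let $F^\epsilon(x) = E[F(x + z_\epsilon)]$ where the random vector $z_\epsilon$ has support of diameter tending to $0$ as $\epsilon \to 0$. Let $x^\epsilon$ and $x^*$ be the unique solutions of VI$(X, F^\epsilon)$ and VI$(X, F)$ respectively. Then $\eta \|x^* - x^\epsilon\| \le \|F^\epsilon(x^*) - F(x^*)\|$, and consequently $x^\epsilon \to x^*$ as $\epsilon \to 0$. -/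
open MeasureTheory Pointwise Filter

theorem stmt_19 {n : ℕ} {Ω : Type*} [MeasurableSpace Ω] (μ : Measure Ω)
    [IsProbabilityMeasure μ]
    (X : Set (EuclideanSpace ℝ (Fin n))) (hX : IsClosed X) (hXc : Convex ℝ X)
    (F : EuclideanSpace ℝ (Fin n) → EuclideanSpace ℝ (Fin n)) (η : ℝ) (hη : 0 < η)
    (hmono : ∀ u ∈ X + Metric.closedBall (0 : EuclideanSpace ℝ (Fin n)) 1,
       ∀ v ∈ X + Metric.closedBall (0 : EuclideanSpace ℝ (Fin n)) 1,
       η * ‖u - v‖^2 ≤ (inner ℝ (u - v) (F u - F v) : ℝ))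
    (hcont : ContinuousOn F (X + Metric.closedBall (0 : EuclideanSpace ℝ (Fin n)) 1))
    (z : ℝ → Ω → EuclideanSpace ℝ (Fin n))
    (hz : ∀ ε ∈ Set.Ioc (0:ℝ) 1, ∀ᵐ ω ∂μ, ‖z ε ω‖ ≤ ε)
    (hint : ∀ ε ∈ Set.Ioc (0:ℝ) 1, ∀ x ∈ X, Integrable (fun ω => F (x + z ε ω)) μ)
    (xe : ℝ → EuclideanSpace ℝ (Fin n))
    (hxe : ∀ ε ∈ Set.Ioc (0:ℝ) 1, xe ε ∈ X ∧
      ∀ y ∈ X, 0 ≤ (inner ℝ (y - xe ε) (∫ ω, F (xe ε + z ε ω) ∂μ) : ℝ))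
    (xs : EuclideanSpace ℝ (Fin n)) (hxs : xs ∈ X)
    (hVI : ∀ y ∈ X, 0 ≤ (inner ℝ (y - xs) (F xs) : ℝ)) :
    (∀ ε ∈ Set.Ioc (0:ℝ) 1,
       η * ‖xs - xe ε‖ ≤ ‖(∫ ω, F (xs + z ε ω) ∂μ) - F xs‖) ∧
    Tendsto xe (nhdsWithin 0 (Set.Ioi 0)) (nhds xs) := by
  set S := X + Metric.closedBall (0 : EuclideanSpace ℝ (Fin n)) 1 with hSdef
  have hmemS : ∀ x ∈ X, ∀ w : EuclideanSpace ℝ (Fin n), ‖w‖ ≤ 1 → x + w ∈ S := by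
    intro x hx w hw
    exact Set.add_mem_add hx (by simpa [Metric.mem_closedBall, dist_eq_norm] using hw)
  have hxsS : xs ∈ S := by simpa using hmemS xs hxs 0 (by simp)
  have key : ∀ ε ∈ Set.Ioc (0:ℝ) 1,
      η * ‖xs - xe ε‖ ≤ ‖(∫ ω, F (xs + z ε ω) ∂μ) - F xs‖ := by
    intro ε hε
    obtain ⟨hxeX, hxeVI⟩ := hxe ε hε
    have hz' := hz ε hε
    have hint1 := hint ε hε xs hxs
    have hint2 := hint ε hε (xe ε) hxeX
    set d := xs - xe ε with hd
    set A := (∫ ω, F (xs + z ε ω) ∂μ) with hA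
    set B := (∫ ω, F (xe ε + z ε ω) ∂μ) with hB
    have hsub : Integrable (fun ω => F (xs + z ε ω) - F (xe ε + z ε ω)) μ :=
      hint1.sub hint2
    have hmono' : η * ‖d‖^2 ≤ (inner ℝ d (A - B) : ℝ) := by
      have h1 : (inner ℝ d (A - B) : ℝ)
          = ∫ ω, (inner ℝ d (F (xs + z ε ω) - F (xe ε + z ε ω)) : ℝ) ∂μ := by
        rw [hA, hB, ← integral_sub hint1 hint2, integral_inner hsub]
      rw [h1]
      have h2 : (η * ‖d‖^2) = ∫ _ω, η * ‖d‖^2 ∂μ := by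
        simp [integral_const]
      rw [h2]
      refine integral_mono_ae (integrable_const _) (hsub.const_inner d) ?_
      filter_upwards [hz'] with ω hω
      have hu : xs + z ε ω ∈ S := hmemS xs hxs _ (hω.trans hε.2)
      have hv : xe ε + z ε ω ∈ S := hmemS (xe ε) hxeX _ (hω.trans hε.2)
      have := hmono _ hu _ hv
      simpa [hd, add_sub_add_right_eq_sub] using this
    have h1 : (0:ℝ) ≤ inner ℝ d B := hxeVI xs hxs
    have h2 : (0:ℝ) ≤ (inner ℝ (xe ε - xs) (F xs) : ℝ) := hVI (xe ε) hxeX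
    have h2' : (inner ℝ d (F xs) : ℝ) ≤ 0 := by
      have : (inner ℝ d (F xs) : ℝ) = -(inner ℝ (xe ε - xs) (F xs) : ℝ) := by
        rw [hd, ← inner_neg_left]; simp
      linarith
    have hstep : η * ‖d‖^2 ≤ (inner ℝ d (A - F xs) : ℝ) := by
      have e1 : (inner ℝ d (A - B) : ℝ) = inner ℝ d A - inner ℝ d B := inner_sub_right d A B
      have e2 : (inner ℝ d (A - F xs) : ℝ) = inner ℝ d A - inner ℝ d (F xs) :=
        inner_sub_right d A (F xs)
      linarith
    have hcs : (inner ℝ d (A - F xs) : ℝ) ≤ ‖d‖ * ‖A - F xs‖ := real_inner_le_norm _ _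
    rcases eq_or_lt_of_le (norm_nonneg d) with h0 | h0
    · rw [← h0]; simp [norm_nonneg]
    · have : η * ‖d‖ * ‖d‖ ≤ ‖A - F xs‖ * ‖d‖ := by
        calc η * ‖d‖ * ‖d‖ = η * ‖d‖^2 := by ring
        _ ≤ ‖d‖ * ‖A - F xs‖ := hstep.trans hcs
        _ = ‖A - F xs‖ * ‖d‖ := by ring
      exact le_of_mul_le_mul_right this h0
  refine ⟨key, ?_⟩
  rw [Metric.tendsto_nhdsWithin_nhds]
  intro δ hδ
  have hc : ContinuousWithinAt F S xs := hcont xs hxsS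
  rw [Metric.continuousWithinAt_iff] at hc
  obtain ⟨r, hr, hc⟩ := hc (η * δ / 2) (by positivity)
  refine ⟨min r 1, by positivity, ?_⟩
  intro ε hε hdist
  have hεpos : 0 < ε := hε
  have hdist' : ε < min r 1 := by
    rwa [Real.dist_eq, sub_zero, abs_of_pos hεpos] at hdist
  have hε1 : ε ∈ Set.Ioc (0:ℝ) 1 := ⟨hεpos, (hdist'.trans_le (min_le_right r 1)).le⟩
  have hεr : ε < r := hdist'.trans_le (min_le_left r 1)
  -- bound the integral difference
  have hz' := hz ε hε1
  have hint1 := hint ε hε1 xs hxs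
  have hbound : ‖(∫ ω, F (xs + z ε ω) ∂μ) - F xs‖ ≤ η * δ / 2 := by
    have hconst : (∫ _ω, F xs ∂μ) = F xs := by simp
    have heq : (∫ ω, F (xs + z ε ω) ∂μ) - F xs
        = ∫ ω, (F (xs + z ε ω) - F xs) ∂μ := by
      rw [integral_sub hint1 (integrable_const _), hconst]
    rw [heq]
    have := norm_integral_le_of_norm_le_const (C := η * δ / 2)
      (f := fun ω => F (xs + z ε ω) - F xs) (μ := μ) ?_
    · simpa using this
    · filter_upwards [hz'] with ω hω
      have hu : xs + z ε ω ∈ S := hmemS xs hxs _ (hω.trans hε1.2)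
      have hd : dist (xs + z ε ω) xs < r := by
        rw [dist_eq_norm]
        simpa using lt_of_le_of_lt hω hεr
      have := hc hu hd
      rw [dist_eq_norm] at this
      exact this.le
  have hk := key ε hε1
  have hle : η * ‖xs - xe ε‖ ≤ η * δ / 2 := hk.trans hbound
  have : ‖xs - xe ε‖ ≤ δ / 2 := by
    nlinarith [norm_nonneg (xs - xe ε)]
  calc dist (xe ε) xs = ‖xs - xe ε‖ := by rw [dist_eq_norm, ← norm_neg]; congr 1; abel
  _ ≤ δ / 2 := this
  _ < δ := by linarith
end
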